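/- The function h(ξ) = ln(∫₀^{exp(ξ)} exp(-t²/2) dt) is strictly concave on ℝ, i.e., h''(ξ) < 0 for all ξ ∈ ℝ. -/

import Mathlib

noncomputable def h (ξ : ℝ) : ℝ :=
  Real.log (∫ t in (0:ℝ)..(Real.exp ξ), Real.exp (-t^2/2))

namespace Stmt11Aux

noncomputable def f (x : ℝ) : ℝ := Real.exp (-x^2/2)
noncomputable def F (x : ℝ) : ℝ := ∫ t in (0:ℝ)..x, Real.exp (-t^2/2)
noncomputable def φ (x : ℝ) : ℝ := (1 - x^2) * F x - x * f x
noncomputable def g (x : ℝ) : ℝ := x * f x / F x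

lemma f_cont : Continuous f := by unfold f; fun_prop
lemma f_pos (x : ℝ) : 0 < f x := Real.exp_pos _

lemma hF (x : ℝ) : HasDerivAt F (f x) x :=
  intervalIntegral.integral_hasDerivAt_right (f_cont.intervalIntegrable 0 x)
    (f_cont.stronglyMeasurableAtFilter _ _) f_cont.continuousAt

lemma F_pos {x : ℝ} (hx : 0 < x) : 0 < F x :=
  intervalIntegral.intervalIntegral_pos_of_pos (f_cont.intervalIntegrable 0 x)
    (fun t => Real.exp_pos _) hx

lemma hf' (x : ℝ) : HasDerivAt f (-x * f x) x := by
  have h1 : HasDerivAt (fun x : ℝ => -x^2/2) (-x) x := by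
    have := ((hasDerivAt_pow 2 x).neg.div_const 2)
    exact this.congr_deriv (by push_cast; ring)
  have := h1.exp
  exact this.congr_deriv (by unfold f; ring)

lemma hφ' (x : ℝ) : HasDerivAt φ (-2 * x * F x) x := by
  have h1 : HasDerivAt (fun x : ℝ => (1 - x^2) * F x)
      ((0 - 2 * x^1) * F x + (1 - x^2) * f x) x :=
    (((hasDerivAt_const x (1:ℝ)).sub (hasDerivAt_pow 2 x))).mul (hF x)
  have h2 : HasDerivAt (fun x : ℝ => x * f x) (1 * f x + x * (-x * f x)) x :=
    (hasDerivAt_id x).mul (hf' x)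
  have := h1.sub h2
  exact this.congr_deriv (by ring)

lemma φ_neg {x : ℝ} (hx : 0 < x) : φ x < 0 := by
  have hanti : StrictAntiOn φ (Set.Ici 0) := by
    apply strictAntiOn_of_deriv_neg (convex_Ici 0)
    · exact fun y _ => ((hφ' y).continuousAt).continuousWithinAt
    · intro y hy
      rw [interior_Ici] at hy
      rw [(hφ' y).deriv]
      have hFy := F_pos hy
      have hy' : 0 < y := hy
      nlinarith [mul_pos hy' hFy]
  have h0 : φ 0 = 0 := by
    simp [φ, F, f]
  have := hanti (Set.self_mem_Ici) (Set.mem_Ici.mpr hx.le) hx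
  rwa [h0] at this

lemma hg' {x : ℝ} (hx : 0 < x) :
    HasDerivAt g (f x * φ x / (F x)^2) x := by
  have hnum : HasDerivAt (fun x : ℝ => x * f x) (1 * f x + x * (-x * f x)) x :=
    (hasDerivAt_id x).mul (hf' x)
  have := hnum.div (hF x) (ne_of_gt (F_pos hx))
  refine this.congr_deriv ?_
  unfold φ
  field_simp
  ring

lemma h_eq : h = fun ξ => Real.log (F (Real.exp ξ)) := rfl

lemma h_hasDeriv (ξ : ℝ) : HasDerivAt h (g (Real.exp ξ)) ξ := by
  have h1 : HasDerivAt (fun ξ : ℝ => F (Real.exp ξ))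
      (f (Real.exp ξ) * Real.exp ξ) ξ :=
    (hF (Real.exp ξ)).comp ξ (Real.hasDerivAt_exp ξ)
  have h2 := h1.log (ne_of_gt (F_pos (Real.exp_pos ξ)))
  refine h2.congr_deriv ?_
  unfold g
  field_simp

lemma deriv_h : deriv h = fun ξ => g (Real.exp ξ) :=
  funext fun ξ => (h_hasDeriv ξ).deriv

lemma deriv2_h (ξ : ℝ) :
    HasDerivAt (deriv h)
      (f (Real.exp ξ) * φ (Real.exp ξ) / (F (Real.exp ξ))^2 * Real.exp ξ) ξ := by
  rw [deriv_h]
  exact (hg' (Real.exp_pos ξ)).comp ξ (Real.hasDerivAt_exp ξ)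

lemma deriv2_neg (ξ : ℝ) : deriv (deriv h) ξ < 0 := by
  rw [(deriv2_h ξ).deriv]
  have h1 := f_pos (Real.exp ξ)
  have h2 := φ_neg (Real.exp_pos ξ)
  have h3 := F_pos (Real.exp_pos ξ)
  have h4 := Real.exp_pos ξ
  have : f (Real.exp ξ) * φ (Real.exp ξ) < 0 := mul_neg_of_pos_of_neg h1 h2
  have h5 : (0:ℝ) < (F (Real.exp ξ))^2 := by positivity
  exact mul_neg_of_neg_of_pos (div_neg_of_neg_of_pos this h5) h4

end Stmt11Aux

theorem stmt11 :
    StrictConcaveOn ℝ Set.univ h ∧ ∀ ξ : ℝ, deriv (deriv h) ξ < 0 := by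
  constructor
  · apply strictConcaveOn_of_deriv2_neg convex_univ
    · exact (fun ξ _ => ((Stmt11Aux.h_hasDeriv ξ).continuousAt).continuousWithinAt)
    · intro x _
      have : deriv^[2] h = deriv (deriv h) := by
        simp [Function.iterate_succ_apply']
      rw [this]
      exact Stmt11Aux.deriv2_neg x
  · exact Stmt11Aux.deriv2_neg
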